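/- If (û, ŵ) ∈ W^{1,2}_loc((0, ∞), ℝ²) satisfies ∫₀¹ r ρ^el(r) dr < ∞, then lim_{r→0} û(r) = 0 and lim_{r→0} ŵ(r) = 0. -/

import Mathlib

open MeasureTheory Set Filter

/-- If `(û, ŵ) ∈ W^{1,2}_loc((0,∞), ℝ²)` satisfies
`∫₀¹ r ρ^el(r) dr < ∞`, where
`ρ^el(r) = (ŵ² - 1 + û')² + (û/r)² + ŵ'² + ŵ²/r²`,
then `û(r) → 0` and `ŵ(r) → 0` as `r → 0`.
Here `uh, wh` stand for `û, ŵ` (continuous representatives), with pointwise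
derivatives `uh', wh'`. -/
lemma noninv {d : ℝ} (hd : 0 < d) : ¬ IntegrableOn (fun r : ℝ => r⁻¹) (Ioo 0 d) := by
  intro h
  have : IntegrableOn (fun x : ℝ => x ^ (-1 : ℝ)) (Ioo (0:ℝ) d) := by
    apply h.congr_fun ?_ measurableSet_Ioo
    intro x hx
    simp [Real.rpow_neg_one]
  rw [intervalIntegral.integrableOn_Ioo_rpow_iff hd] at this
  linarith

lemma key {b : ℝ} (hb : 0 < b) (g g' : ℝ → ℝ)
    (hg : ∀ r ∈ Ioi (0:ℝ), HasDerivAt g (g' r) r)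
    (hnn : ∀ r ∈ Ioi (0:ℝ), 0 ≤ g r)
    (hg' : IntegrableOn g' (Ioo 0 b))
    (hint : IntegrableOn (fun r => g r / r) (Ioo 0 b)) :
    Tendsto g (nhdsWithin 0 (Ioi 0)) (nhds 0) := by
  set c := b / 2 with hc
  have hc0 : 0 < c := by positivity
  have hcb : c < b := by simp [hc]; linarith
  have hIcc : IntegrableOn g' (Icc 0 c) := by
    rw [integrableOn_Icc_iff_integrableOn_Ioo]
    exact hg'.mono_set (Ioo_subset_Ioo le_rfl hcb.le)
  set F : ℝ → ℝ := fun x => ∫ t in Ioc 0 x, g' t with hF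
  have hFcont : ContinuousOn F (Icc 0 c) := intervalIntegral.continuousOn_primitive hIcc
  have hII : ∀ x ∈ Ioc (0:ℝ) c, IntervalIntegrable g' volume x c := by
    intro x hx
    rw [intervalIntegrable_iff_integrableOn_Ioc_of_le hx.2]
    exact hg'.mono_set fun t ht => ⟨lt_trans hx.1 ht.1, lt_of_le_of_lt ht.2 hcb⟩
  have hgx : ∀ x ∈ Ioc (0:ℝ) c, g x = g c - F c + F x := by
    intro x hx
    have hftc : ∫ t in x..c, g' t = g c - g x := by
      apply intervalIntegral.integral_eq_sub_of_hasDerivAt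
      · intro t ht
        rw [uIcc_of_le hx.2] at ht
        exact hg t (lt_of_lt_of_le hx.1 ht.1)
      · exact hII x hx
    have hadd : (∫ t in (0:ℝ)..x, g' t) + ∫ t in x..c, g' t = ∫ t in (0:ℝ)..c, g' t := by
      apply intervalIntegral.integral_add_adjacent_intervals
      · rw [intervalIntegrable_iff_integrableOn_Ioc_of_le hx.1.le]
        exact hg'.mono_set fun t ht => ⟨ht.1, lt_of_le_of_lt (ht.2.trans hx.2) hcb⟩
      · exact hII x hx
    have h1 : F x = ∫ t in (0:ℝ)..x, g' t := (intervalIntegral.integral_of_le hx.1.le).symm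
    have h2 : F c = ∫ t in (0:ℝ)..c, g' t := (intervalIntegral.integral_of_le hc0.le).symm
    rw [h1, h2, ← hadd] at *
    linarith [hftc]
  have hF0 : F 0 = 0 := by simp [hF]
  have hFt : Tendsto F (nhdsWithin 0 (Ioi 0)) (nhds 0) := by
    have h0 : ContinuousWithinAt F (Icc 0 c) 0 := hFcont 0 ⟨le_rfl, hc0.le⟩
    have := h0.mono (Ioo_subset_Icc_self (a := (0:ℝ)) (b := c))
    rw [ContinuousWithinAt, nhdsWithin_Ioo_eq_nhdsGT hc0, hF0] at this
    exact this
  set L := g c - F c with hL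
  have hgt : Tendsto g (nhdsWithin 0 (Ioi 0)) (nhds L) := by
    have : Tendsto (fun x => g c - F c + F x) (nhdsWithin 0 (Ioi 0)) (nhds (g c - F c + 0)) :=
      (tendsto_const_nhds.add hFt)
    rw [add_zero] at this
    apply this.congr'
    filter_upwards [Ioo_mem_nhdsGT hc0] with x hx
    exact (hgx x ⟨hx.1, hx.2.le⟩).symm
  have hL0 : 0 ≤ L := by
    apply ge_of_tendsto hgt
    filter_upwards [self_mem_nhdsWithin] with x hx using hnn x hx
  rcases eq_or_lt_of_le hL0 with h | h
  · rwa [← h] at hgt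
  · exfalso
    have hev : ∀ᶠ x in nhdsWithin 0 (Ioi 0), L / 2 < g x :=
      hgt.eventually (eventually_gt_nhds (by linarith))
    rw [eventually_nhdsWithin_iff, Metric.eventually_nhds_iff] at hev
    obtain ⟨ε, hε, hev⟩ := hev
    set d := min ε b with hd
    have hd0 : 0 < d := lt_min hε hb
    have hint' : IntegrableOn (fun r => g r / r) (Ioo 0 d) :=
      hint.mono_set (Ioo_subset_Ioo le_rfl (min_le_right _ _))
    have : IntegrableOn (fun r : ℝ => L / 2 * r⁻¹) (Ioo 0 d) := by
      apply Integrable.mono' hint'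
      · exact (measurable_const.mul measurable_inv).aestronglyMeasurable
      · rw [ae_restrict_iff' measurableSet_Ioo]
        apply ae_of_all
        intro x hx
        have hx0 : 0 < x := hx.1
        have hgx2 : L / 2 ≤ g x := by
          apply le_of_lt
          apply hev ?_ hx0
          rw [Real.dist_eq, sub_zero, abs_of_pos hx0]
          exact lt_of_lt_of_le hx.2 (min_le_left _ _)
        rw [Real.norm_eq_abs, abs_of_nonneg (by positivity), ← div_eq_mul_inv]
        gcongr
    have h2 : IntegrableOn (fun x : ℝ => 2 / L * (L / 2 * x⁻¹)) (Ioo 0 d) := this.const_mul (2 / L)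
    have h3 : IntegrableOn (fun r : ℝ => r⁻¹) (Ioo 0 d) := by
      apply h2.congr_fun ?_ measurableSet_Ioo
      intro x hx
      have hx0 : (0:ℝ) < x := hx.1
      field_simp
    exact noninv hd0 h3

theorem stmt2 (uh wh uh' wh' : ℝ → ℝ)
    (hu : ∀ r ∈ Ioi (0 : ℝ), HasDerivAt uh (uh' r) r)
    (hw : ∀ r ∈ Ioi (0 : ℝ), HasDerivAt wh (wh' r) r)
    (hE : IntegrableOn
      (fun r => r * ((wh r ^ 2 - 1 + uh' r) ^ 2 + (uh r / r) ^ 2 + wh' r ^ 2 + wh r ^ 2 / r ^ 2))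
      (Ioo 0 1)) :
    Tendsto uh (nhdsWithin 0 (Ioi 0)) (nhds 0) ∧
    Tendsto wh (nhdsWithin 0 (Ioi 0)) (nhds 0) := by
  -- measurability
  have hucont : ContinuousOn uh (Ioi 0) := fun r hr => (hu r hr).continuousAt.continuousWithinAt
  have hwcont : ContinuousOn wh (Ioi 0) := fun r hr => (hw r hr).continuousAt.continuousWithinAt
  have hmu : AEStronglyMeasurable uh (volume.restrict (Ioi 0)) :=
    hucont.aestronglyMeasurable measurableSet_Ioi
  have hmw : AEStronglyMeasurable wh (volume.restrict (Ioi 0)) :=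
    hwcont.aestronglyMeasurable measurableSet_Ioi
  have hmu' : AEStronglyMeasurable uh' (volume.restrict (Ioi 0)) := by
    apply (measurable_deriv uh).aestronglyMeasurable.congr
    rw [Filter.EventuallyEq, ae_restrict_iff' measurableSet_Ioi]
    exact ae_of_all _ fun r hr => (hu r hr).deriv
  have hmw' : AEStronglyMeasurable wh' (volume.restrict (Ioi 0)) := by
    apply (measurable_deriv wh).aestronglyMeasurable.congr
    rw [Filter.EventuallyEq, ae_restrict_iff' measurableSet_Ioi]
    exact ae_of_all _ fun r hr => (hw r hr).deriv
  have mres : ∀ (f : ℝ → ℝ), AEStronglyMeasurable f (volume.restrict (Ioi 0)) →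
      ∀ s : Set ℝ, s ⊆ Ioi (0:ℝ) → AEStronglyMeasurable f (volume.restrict s) :=
    fun f hf s hs => hf.mono_measure (Measure.restrict_mono hs le_rfl)
  have hmi : AEStronglyMeasurable (fun r : ℝ => r) (volume.restrict (Ioi 0)) :=
    continuous_id.aestronglyMeasurable
  have hminv : AEStronglyMeasurable (fun r : ℝ => r⁻¹) (volume.restrict (Ioi 0)) :=
    measurable_inv.aestronglyMeasurable
  have hTnn : ∀ r ∈ Ioo (0:ℝ) 1, 0 ≤ r * ((wh r ^ 2 - 1 + uh' r) ^ 2 + (uh r / r) ^ 2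
      + wh' r ^ 2 + wh r ^ 2 / r ^ 2) := by
    intro r hr
    have : (0:ℝ) < r := hr.1
    positivity
  have hsub1 : Ioo (0:ℝ) 1 ⊆ Ioi 0 := Ioo_subset_Ioi_self
  -- the four pieces
  have hA : IntegrableOn (fun r => r * (wh r ^ 2 - 1 + uh' r) ^ 2) (Ioo 0 1) := by
    apply hE.mono'
    · exact (hmi.mul ((((hmw.pow 2).sub aestronglyMeasurable_const).add hmu').pow 2)).mono_measure
        (Measure.restrict_mono hsub1 le_rfl)
    · rw [ae_restrict_iff' measurableSet_Ioo]
      apply ae_of_all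
      intro r hr
      have hr0 : (0:ℝ) < r := hr.1
      rw [Real.norm_eq_abs, abs_of_nonneg (by positivity)]
      have h1 : 0 ≤ (uh r / r) ^ 2 + wh' r ^ 2 + wh r ^ 2 / r ^ 2 := by positivity
      nlinarith
  have hB : IntegrableOn (fun r => uh r ^ 2 / r) (Ioo 0 1) := by
    apply hE.mono'
    · have : AEStronglyMeasurable (fun r : ℝ => uh r ^ 2 * r⁻¹) (volume.restrict (Ioo 0 1)) :=
        ((hmu.pow 2).mul hminv).mono_measure (Measure.restrict_mono hsub1 le_rfl)
      exact this.congr (ae_of_all _ fun r => (div_eq_mul_inv _ _).symm)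
    · rw [ae_restrict_iff' measurableSet_Ioo]
      apply ae_of_all
      intro r hr
      have hr0 : (0:ℝ) < r := hr.1
      rw [Real.norm_eq_abs, abs_of_nonneg (by positivity)]
      have he : uh r ^ 2 / r = r * (uh r / r) ^ 2 := by field_simp
      have h1 : 0 ≤ (wh r ^ 2 - 1 + uh' r) ^ 2 + wh' r ^ 2 + wh r ^ 2 / r ^ 2 := by positivity
      nlinarith
  have hC : IntegrableOn (fun r => r * wh' r ^ 2) (Ioo 0 1) := by
    apply hE.mono'
    · exact (hmi.mul (hmw'.pow 2)).mono_measure (Measure.restrict_mono hsub1 le_rfl)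
    · rw [ae_restrict_iff' measurableSet_Ioo]
      apply ae_of_all
      intro r hr
      have hr0 : (0:ℝ) < r := hr.1
      rw [Real.norm_eq_abs, abs_of_nonneg (by positivity)]
      have h1 : 0 ≤ (wh r ^ 2 - 1 + uh' r) ^ 2 + (uh r / r) ^ 2 + wh r ^ 2 / r ^ 2 := by positivity
      nlinarith
  have hD : IntegrableOn (fun r => wh r ^ 2 / r) (Ioo 0 1) := by
    apply hE.mono'
    · have : AEStronglyMeasurable (fun r : ℝ => wh r ^ 2 * r⁻¹) (volume.restrict (Ioo 0 1)) :=
        ((hmw.pow 2).mul hminv).mono_measure (Measure.restrict_mono hsub1 le_rfl)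
      exact this.congr (ae_of_all _ fun r => (div_eq_mul_inv _ _).symm)
    · rw [ae_restrict_iff' measurableSet_Ioo]
      apply ae_of_all
      intro r hr
      have hr0 : (0:ℝ) < r := hr.1
      rw [Real.norm_eq_abs, abs_of_nonneg (by positivity)]
      have he : wh r ^ 2 / r = r * (wh r ^ 2 / r ^ 2) := by field_simp
      have h1 : 0 ≤ (wh r ^ 2 - 1 + uh' r) ^ 2 + (uh r / r) ^ 2 + wh' r ^ 2 := by positivity
      nlinarith
  -- the w part
  have hwsq : Tendsto (fun r => wh r ^ 2) (nhdsWithin 0 (Ioi 0)) (nhds 0) := by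
    apply key zero_lt_one (fun r => wh r ^ 2) (fun r => 2 * wh r * wh' r)
    · intro r hr
      have h2 := (hw r hr).fun_pow 2
      norm_num at h2
      convert h2 using 1
    · intro r _; positivity
    · apply (hC.add hD).mono'
      · exact ((aestronglyMeasurable_const.mul hmw).mul hmw').mono_measure
          (Measure.restrict_mono hsub1 le_rfl)
      · rw [ae_restrict_iff' measurableSet_Ioo]
        apply ae_of_all
        intro r hr
        have hr0 : (0:ℝ) < r := hr.1
        have he : wh r ^ 2 / r * r = wh r ^ 2 := div_mul_cancel₀ _ hr0.ne'
        rw [Real.norm_eq_abs, abs_le]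
        simp only [Pi.add_apply]
        constructor
        · nlinarith [sq_nonneg (r * wh' r + wh r), hr0, he]
        · nlinarith [sq_nonneg (r * wh' r - wh r), hr0, he]
    · exact hD
  have hwlim : Tendsto wh (nhdsWithin 0 (Ioi 0)) (nhds 0) := by
    rw [tendsto_zero_iff_abs_tendsto_zero]
    have := (Real.continuous_sqrt.tendsto 0).comp hwsq
    rw [Real.sqrt_zero] at this
    apply this.congr
    intro r
    simp [Real.sqrt_sq_eq_abs]
  refine ⟨?_, hwlim⟩
  -- the u part
  have hev : ∀ᶠ r in nhdsWithin 0 (Ioi 0), |wh r| < 1 := by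
    have := Metric.tendsto_nhds.mp hwlim 1 one_pos
    apply this.mono
    intro r hr
    rwa [Real.dist_eq, sub_zero] at hr
  rw [eventually_nhdsWithin_iff, Metric.eventually_nhds_iff] at hev
  obtain ⟨ε, hε, hev⟩ := hev
  set b := min ε 1 with hbdef
  have hb0 : 0 < b := lt_min hε one_pos
  have hsubb : Ioo (0:ℝ) b ⊆ Ioo 0 1 := Ioo_subset_Ioo le_rfl (min_le_right _ _)
  have hsubb' : Ioo (0:ℝ) b ⊆ Ioi 0 := fun r hr => hr.1
  have hbound : ∀ r ∈ Ioo (0:ℝ) b, |wh r| < 1 := by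
    intro r hr
    apply hev ?_ hr.1
    rw [Real.dist_eq, sub_zero, abs_of_pos hr.1]
    exact lt_of_lt_of_le hr.2 (min_le_left _ _)
  have h2r : IntegrableOn (fun r : ℝ => 2 * (r * (wh r ^ 2 - 1 + uh' r) ^ 2) + 2 * r)
      (Ioo 0 b) := by
    apply Integrable.add
    · exact ((hA.mono_set hsubb)).const_mul 2
    · have : IntervalIntegrable (fun r : ℝ => 2 * r) volume 0 b :=
        (continuous_const.mul continuous_id).intervalIntegrable 0 b
      rwa [intervalIntegrable_iff_integrableOn_Ioo_of_le hb0.le] at this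
  have hu2 : IntegrableOn (fun r => r * uh' r ^ 2) (Ioo 0 b) := by
    apply h2r.mono'
    · exact (hmi.mul (hmu'.pow 2)).mono_measure (Measure.restrict_mono hsubb' le_rfl)
    · rw [ae_restrict_iff' measurableSet_Ioo]
      apply ae_of_all
      intro r hr
      have hr0 : (0:ℝ) < r := hr.1
      have hw1 : wh r ^ 2 ≤ 1 := by
        have := abs_lt.mp (hbound r hr)
        nlinarith
      rw [Real.norm_eq_abs, abs_of_nonneg (by positivity)]
      have h1 : uh' r ^ 2 ≤ 2 * (wh r ^ 2 - 1 + uh' r) ^ 2 + 2 := by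
        nlinarith [sq_nonneg (wh r ^ 2 - 1 + uh' r + (wh r ^ 2 - 1)), sq_nonneg (wh r)]
      calc r * uh' r ^ 2 ≤ r * (2 * (wh r ^ 2 - 1 + uh' r) ^ 2 + 2) :=
            mul_le_mul_of_nonneg_left h1 hr0.le
        _ = 2 * (r * (wh r ^ 2 - 1 + uh' r) ^ 2) + 2 * r := by ring
  have husq : Tendsto (fun r => uh r ^ 2) (nhdsWithin 0 (Ioi 0)) (nhds 0) := by
    apply key hb0 (fun r => uh r ^ 2) (fun r => 2 * uh r * uh' r)
    · intro r hr
      have h2 := (hu r hr).fun_pow 2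
      norm_num at h2
      convert h2 using 1
    · intro r _; positivity
    · apply (hu2.add (hB.mono_set hsubb)).mono'
      · exact ((aestronglyMeasurable_const.mul hmu).mul hmu').mono_measure
          (Measure.restrict_mono hsubb' le_rfl)
      · rw [ae_restrict_iff' measurableSet_Ioo]
        apply ae_of_all
        intro r hr
        have hr0 : (0:ℝ) < r := hr.1
        have he : uh r ^ 2 / r * r = uh r ^ 2 := div_mul_cancel₀ _ hr0.ne'
        rw [Real.norm_eq_abs, abs_le]
        simp only [Pi.add_apply]
        constructor
        · nlinarith [sq_nonneg (r * uh' r + uh r), hr0, he]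
        · nlinarith [sq_nonneg (r * uh' r - uh r), hr0, he]
    · exact hB.mono_set hsubb
  rw [tendsto_zero_iff_abs_tendsto_zero]
  have := (Real.continuous_sqrt.tendsto 0).comp husq
  rw [Real.sqrt_zero] at this
  apply this.congr
  intro r
  simp [Real.sqrt_sq_eq_abs]
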